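/- Let q be a prime power and let u be a real number with |u| < 1/q. Then the family of factors (1 - u^{deg φ}), indexed by the monic irreducible polynomials φ over F_q, is multipliable in ℝ and ∏_φ (1 - u^{deg φ}) = 1 - qu. -/

import Mathlib

open Polynomial

lemma aux_dvd_of_pow_sub_one_dvd {q d n : ℕ} (hq : 2 ≤ q) (h : q ^ d - 1 ∣ q ^ n - 1) :
    d ∣ n := by
  rcases Nat.eq_zero_or_pos d with rfl | hd
  · simp only [pow_zero, Nat.sub_self, Nat.zero_dvd] at h
    have : q ^ n = 1 := by
      have h1 : 1 ≤ q ^ n := Nat.one_le_pow _ _ (by omega)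
      omega
    have : n = 0 := by
      rcases Nat.eq_zero_or_pos n with rfl | hn
      · rfl
      · exfalso; have := Nat.one_lt_pow hn.ne' (by omega : 1 < q); omega
    simp [this]
  -- d > 0
  set r := n % d with hr
  have hrd : r < d := Nat.mod_lt _ hd
  have hnd : n = d * (n / d) + r := (Nat.div_add_mod n d).symm
  -- work in ℤ
  have hz : ((q : ℤ) ^ d - 1) ∣ ((q : ℤ) ^ n - 1) := by
    have := Int.natCast_dvd_natCast.mpr h
    have h1 : (1:ℤ) ≤ (q:ℤ) ^ d := one_le_pow₀ (by exact_mod_cast (by omega : 1 ≤ q))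
    have h2 : (1:ℤ) ≤ (q:ℤ) ^ n := one_le_pow₀ (by exact_mod_cast (by omega : 1 ≤ q))
    push_cast [Nat.cast_sub (Nat.one_le_pow _ _ (by omega : 0 < q)),
      Nat.cast_sub (Nat.one_le_pow _ _ (by omega : 0 < q))] at this
    exact_mod_cast this
  have hdvd2 : ((q : ℤ) ^ d - 1) ∣ ((q : ℤ) ^ r - 1) := by
    have key : (q:ℤ) ^ n - 1 = (q:ℤ)^r * (((q:ℤ)^d)^(n/d) - 1) + ((q:ℤ)^r - 1) := by
      conv_lhs => rw [hnd]
      rw [← pow_mul]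
      rw [pow_add]
      ring
    have hdk : ((q : ℤ) ^ d - 1) ∣ (((q:ℤ)^d)^(n/d) - 1) := by
      simpa using sub_dvd_pow_sub_pow ((q:ℤ)^d) 1 (n/d)
    have := dvd_sub hz (Dvd.dvd.mul_left hdk ((q:ℤ)^r))
    rw [key] at this
    simpa using this
  have hr0 : (q : ℤ) ^ r - 1 = 0 := by
    apply Int.eq_zero_of_abs_lt_dvd hdvd2
    have h1 : (1:ℤ) ≤ (q:ℤ) ^ r := one_le_pow₀ (by exact_mod_cast (by omega : 1 ≤ q))
    have h2 : (q:ℤ) ^ r < (q:ℤ) ^ d :=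
      pow_lt_pow_right₀ (by exact_mod_cast hq) hrd
    rw [abs_of_nonneg (by omega)]
    omega
  have : q ^ r = 1 := by
    have : (q:ℤ) ^ r = 1 := by omega
    exact_mod_cast this
  have : r = 0 := by
    rcases Nat.eq_zero_or_pos r with h | h
    · exact h
    · exfalso; have := Nat.one_lt_pow h.ne' (by omega : 1 < q); omega
  exact Nat.dvd_of_mod_eq_zero this

variable {F : Type} [Field F] [Fintype F]

lemma aux_finite_natDegree_le (n : ℕ) : {f : F[X] | f.natDegree ≤ n}.Finite := by
  have : Finite (Polynomial.degreeLT F (n + 1)) :=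
    Finite.of_equiv _ (Polynomial.degreeLTEquiv F (n + 1)).symm.toEquiv
  apply Set.Finite.subset (Set.toFinite ((Polynomial.degreeLT F (n + 1) : Submodule F F[X]) : Set F[X]))
  intro f hf
  simp only [SetLike.mem_coe, Polynomial.mem_degreeLT]
  calc f.degree ≤ (f.natDegree : WithBot ℕ) := Polynomial.degree_le_natDegree
    _ < ((n+1 : ℕ) : WithBot ℕ) := by exact_mod_cast Nat.lt_succ_of_le hf


lemma aux_card_adjoinRoot {f : F[X]} (hi : Irreducible f) :
    ∃ _ : Fintype (AdjoinRoot f), Fintype.card (AdjoinRoot f) = Fintype.card F ^ f.natDegree := by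
  haveI := Fact.mk hi
  let pb : PowerBasis F (AdjoinRoot f) := AdjoinRoot.powerBasis hi.ne_zero
  haveI : Module.Finite F (AdjoinRoot f) := pb.finite
  haveI : Finite (AdjoinRoot f) := Module.finite_of_finite F
  letI : Fintype (AdjoinRoot f) := Fintype.ofFinite _
  refine ⟨inferInstance, ?_⟩
  rw [Module.card_fintype pb.basis, Fintype.card_fin]
  show _ ^ (AdjoinRoot.powerBasis hi.ne_zero).dim = _
  rw [AdjoinRoot.powerBasis_dim]

lemma aux_dvd_X_pow_card {f : F[X]} (hm : f.Monic) (hi : Irreducible f) {n : ℕ}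
    (hd : f.natDegree ∣ n) :
    f ∣ X ^ (Fintype.card F ^ n) - X := by
  haveI := Fact.mk hi
  obtain ⟨fin, hcard⟩ := aux_card_adjoinRoot hi
  obtain ⟨c, hc⟩ := hd
  set r := AdjoinRoot.root f with hrdef
  have hroot : r ^ (Fintype.card F ^ n) = r := by
    rw [hc, pow_mul, ← hcard]
    exact FiniteField.pow_card_pow c r
  have haev : aeval r (X ^ (Fintype.card F ^ n) - X : F[X]) = 0 := by
    simp [hroot]
  have hmin : minpoly F r = f := by
    rw [AdjoinRoot.minpoly_root hi.ne_zero, hm.leadingCoeff, inv_one, map_one, mul_one]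
  have := minpoly.dvd F r haev
  rwa [hmin] at this

lemma aux_minpoly_natDegree_dvd {n : ℕ} (α : AlgebraicClosure F)
    (hα : α ^ (Fintype.card F ^ n) = α) :
    (minpoly F α).natDegree ∣ n := by
  set q := Fintype.card F with hqdef
  have hq2 : 2 ≤ q := Fintype.one_lt_card
  set p := ringChar F with hpdef
  haveI : CharP F p := ringChar.charP F
  have hp : p.Prime := CharP.char_is_prime F p
  haveI := Fact.mk hp
  obtain ⟨m, -, hcard⟩ := FiniteField.card F p
  have hint : IsIntegral F α := Algebra.IsIntegral.isIntegral α
  set φ := minpoly F α with hφdef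
  have hφirr : Irreducible φ := minpoly.irreducible hint
  have hφmonic : φ.Monic := minpoly.monic hint
  haveI := Fact.mk hφirr
  obtain ⟨fin, hcardL'⟩ := aux_card_adjoinRoot hφirr
  have hcardL : Nat.card (AdjoinRoot φ) = q ^ φ.natDegree := by
    rw [Nat.card_eq_fintype_card, hcardL', hqdef]
  set L := AdjoinRoot φ
  set r : L := AdjoinRoot.root φ with hrdef
  let ψ : L →ₐ[F] AlgebraicClosure F := AdjoinRoot.liftAlgHom φ (Algebra.ofId F _) α (minpoly.aeval F α)
  have hψinj : Function.Injective ψ := ψ.toRingHom.injective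
  have hroot : r ^ (q ^ n) = r := by
    have hψr : ψ r = α := AdjoinRoot.liftAlgHom_root φ (Algebra.ofId F _) α (minpoly.aeval F α)
    apply hψinj
    rw [map_pow]
    show (ψ r) ^ (q ^ n) = ψ r
    rw [hψr, hα]
  -- every element of L is fixed by x ↦ x ^ q ^ n
  haveI : CharP L p := charP_of_injective_algebraMap (algebraMap F L).injective p
  have hqn : q ^ n = p ^ ((m : ℕ) * n) := by rw [hqdef, hcard, ← pow_mul]
  let Ψ : L →ₐ[F] L :=
    { toRingHom := iterateFrobenius L p (m * n)
      commutes' := fun c => by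
        show iterateFrobenius L p ((m : ℕ) * n) (algebraMap F L c) = algebraMap F L c
        rw [iterateFrobenius_def, ← map_pow, ← hqn, hqdef, FiniteField.pow_card_pow] }
  have heq : AlgHom.equalizer Ψ (AlgHom.id F L) = ⊤ := by
    rw [eq_top_iff, ← AdjoinRoot.adjoinRoot_eq_top, Algebra.adjoin_le_iff,
      Set.singleton_subset_iff]
    show Ψ r = r
    show iterateFrobenius L p (m * n) r = r
    rw [iterateFrobenius_def, ← hqn, hroot]
  have hfix : ∀ x : L, x ^ (q ^ n) = x := by
    intro x
    have hx : x ∈ AlgHom.equalizer Ψ (AlgHom.id F L) := heq ▸ trivial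
    have : Ψ x = x := hx
    rw [hqn]
    calc x ^ p ^ (m * n) = iterateFrobenius L p (m * n) x := (iterateFrobenius_def _ _ _).symm
      _ = x := this
  -- use a generator of Lˣ
  obtain ⟨ζ, hζ⟩ := IsCyclic.exists_generator (α := Lˣ)
  have horder : orderOf ζ = q ^ φ.natDegree - 1 := by
    rw [orderOf_eq_card_of_forall_mem_zpowers hζ, Nat.card_units, hcardL]
  have hζfix : ζ ^ (q ^ n) = ζ := by
    apply Units.ext
    rw [Units.val_pow_eq_pow_val]
    exact hfix ζ
  have hζ1 : ζ ^ (q ^ n - 1) = 1 := by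
    have h1 : 1 ≤ q ^ n := Nat.one_le_pow _ _ (by omega)
    have : ζ ^ (q ^ n - 1) * ζ = ζ := by
      rw [← pow_succ, Nat.sub_add_cancel h1, hζfix]
    exact mul_right_cancel (by rw [this, one_mul])
  have hdvd : q ^ φ.natDegree - 1 ∣ q ^ n - 1 := horder ▸ orderOf_dvd_of_pow_eq_one hζ1
  exact aux_dvd_of_pow_sub_one_dvd hq2 hdvd

lemma aux_irr_finite (n : ℕ) :
    {f : F[X] | f.Monic ∧ Irreducible f ∧ f.natDegree ∣ n ∧ f.natDegree ≤ n}.Finite :=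
  (aux_finite_natDegree_le n).subset (fun _ hf => hf.2.2.2)

noncomputable def irrFinset (F : Type) [Field F] [Fintype F] (n : ℕ) : Finset F[X] :=
  (aux_irr_finite (F := F) n).toFinset

lemma mem_irrFinset {n : ℕ} (hn : n ≠ 0) {f : F[X]} :
    f ∈ irrFinset F n ↔ f.Monic ∧ Irreducible f ∧ f.natDegree ∣ n := by
  rw [irrFinset, Set.Finite.mem_toFinset]
  constructor
  · rintro ⟨h1, h2, h3, h4⟩; exact ⟨h1, h2, h3⟩
  · rintro ⟨h1, h2, h3⟩
    exact ⟨h1, h2, h3, Nat.le_of_dvd (Nat.pos_of_ne_zero hn) h3⟩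

theorem aux_key_count {n : ℕ} (hn : n ≠ 0) :
    ∑ f ∈ irrFinset F n, f.natDegree = Fintype.card F ^ n := by
  classical
  set q := Fintype.card F with hqdef
  have hq2 : 2 ≤ q := Fintype.one_lt_card
  have hq1n : 1 < q ^ n := Nat.one_lt_pow hn hq2
  set p := ringChar F with hpdef
  haveI : CharP F p := ringChar.charP F
  have hp : p.Prime := CharP.char_is_prime F p
  haveI := Fact.mk hp
  obtain ⟨m, -, hcard⟩ := FiniteField.card F p
  set P : F[X] := X ^ (q ^ n) - X with hPdef
  have hpdvd : p ∣ q ^ n := by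
    rw [hqdef, hcard, ← pow_mul]
    exact dvd_pow_self p (by positivity)
  have hsep : P.Separable := galois_poly_separable p (q ^ n) hpdvd
  set K := AlgebraicClosure F
  have hsplits : (P.map (algebraMap F K)).Splits := IsAlgClosed.splits _
  have hPne : P ≠ 0 := FiniteField.X_pow_card_sub_X_ne_zero F hq1n
  have hcardroot : Fintype.card (P.rootSet K) = q ^ n := by
    rw [card_rootSet_eq_natDegree hsep hsplits]
    exact FiniteField.X_pow_card_pow_sub_X_natDegree_eq F hn hq2
  set s : Finset K := (P.rootSet K).toFinset with hsdef
  have hsc : s.card = q ^ n := by rw [hsdef, Set.toFinset_card, hcardroot]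
  have hmem : ∀ α : K, α ∈ s ↔ α ^ (q ^ n) = α := by
    intro α
    rw [hsdef, Set.mem_toFinset, mem_rootSet]
    constructor
    · rintro ⟨-, heval⟩
      rw [hPdef] at heval
      simp only [map_sub, map_pow, aeval_X] at heval
      exact sub_eq_zero.mp heval
    · intro h
      refine ⟨hPne, ?_⟩
      rw [hPdef]
      simp only [map_sub, map_pow, aeval_X]
      rw [h, sub_self]
  have hminmem : ∀ α ∈ s, minpoly F α ∈ irrFinset F n := by
    intro α hα
    have hint : IsIntegral F α := Algebra.IsIntegral.isIntegral α
    exact (mem_irrFinset hn).mpr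
      ⟨minpoly.monic hint, minpoly.irreducible hint,
        aux_minpoly_natDegree_dvd α ((hmem α).mp hα)⟩
  have hcount := Finset.card_eq_sum_card_fiberwise hminmem
  have hfiber : ∀ f ∈ irrFinset F n,
      (s.filter (fun α => minpoly F α = f)).card = f.natDegree := by
    intro f hf
    obtain ⟨hm, hi, hd⟩ := (mem_irrFinset hn).mp hf
    have hflt : s.filter (fun α => minpoly F α = f) = (f.rootSet K).toFinset := by
      ext α
      simp only [Finset.mem_filter, Set.mem_toFinset, mem_rootSet]
      constructor
      · rintro ⟨-, rfl⟩
        exact ⟨hm.ne_zero, minpoly.aeval F α⟩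
      · rintro ⟨hf0, haev⟩
        have hdvdP : f ∣ P := aux_dvd_X_pow_card hm hi hd
        obtain ⟨c, hc⟩ := hdvdP
        have hαs : α ∈ s := by
          rw [hmem]
          have : aeval α P = 0 := by rw [hc, map_mul, haev, zero_mul]
          rw [hPdef] at this
          simp only [map_sub, map_pow, aeval_X] at this
          exact sub_eq_zero.mp this
        exact ⟨hαs, (minpoly.eq_of_irreducible_of_monic hi haev hm).symm⟩
    rw [hflt, Set.toFinset_card,
      card_rootSet_eq_natDegree (PerfectField.separable_of_irreducible hi)
        (IsAlgClosed.splits _)]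
  calc ∑ f ∈ irrFinset F n, f.natDegree
      = ∑ f ∈ irrFinset F n, (s.filter (fun α => minpoly F α = f)).card :=
        Finset.sum_congr rfl (fun f hf => (hfiber f hf).symm)
    _ = s.card := hcount.symm
    _ = q ^ n := hsc

def gmap (F : Type) [Field F] : {f : F[X] // f.Monic ∧ Irreducible f} × ℕ → ℕ :=
  fun y => (y.2 + 1) * y.1.1.natDegree

lemma aux_fiber_empty : IsEmpty {x : {f : F[X] // f.Monic ∧ Irreducible f} × ℕ // gmap F x = 0} := by
  constructor
  rintro ⟨⟨φ, k⟩, hx⟩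
  have h : (k + 1) * φ.1.natDegree = 0 := hx
  have h2 := φ.2.2.natDegree_pos
  rcases Nat.mul_eq_zero.mp h with h1 | h1 <;> omega

lemma aux_fiber_hasSum {n : ℕ} (hn : n ≠ 0) (h : F[X] → ℝ) :
    HasSum (fun x : {x : {f : F[X] // f.Monic ∧ Irreducible f} × ℕ // gmap F x = n} => h x.1.1.1) (∑ f ∈ irrFinset F n, h f) := by
  let e : {f : F[X] // f ∈ irrFinset F n} ≃ {x : {f : F[X] // f.Monic ∧ Irreducible f} × ℕ // gmap F x = n} :=
    { toFun := fun f => by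
        refine ⟨(⟨f.1, ?_, ?_⟩, n / f.1.natDegree - 1), ?_⟩
        · exact ((mem_irrFinset hn).mp f.2).1
        · exact ((mem_irrFinset hn).mp f.2).2.1
        · obtain ⟨hm, hi, hd⟩ := (mem_irrFinset hn).mp f.2
          have hdpos : 0 < f.1.natDegree := hi.natDegree_pos
          have hq : 0 < n / f.1.natDegree :=
            Nat.div_pos (Nat.le_of_dvd (Nat.pos_of_ne_zero hn) hd) hdpos
          show (n / f.1.natDegree - 1 + 1) * f.1.natDegree = n
          rw [Nat.sub_add_cancel hq, Nat.div_mul_cancel hd]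
      invFun := fun x => by
        refine ⟨x.1.1.1, (mem_irrFinset hn).mpr ⟨x.1.1.2.1, x.1.1.2.2, ?_⟩⟩
        have hx : (x.1.2 + 1) * x.1.1.1.natDegree = n := x.2
        exact Dvd.intro_left _ hx
      left_inv := fun f => Subtype.ext rfl
      right_inv := fun x => by
        have hx : (x.1.2 + 1) * x.1.1.1.natDegree = n := x.2
        have hdpos : 0 < x.1.1.1.natDegree := x.1.1.2.2.natDegree_pos
        apply Subtype.ext
        apply Prod.ext
        · exact Subtype.ext rfl
        · show n / x.1.1.1.natDegree - 1 = x.1.2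
          have : n / x.1.1.1.natDegree = x.1.2 + 1 :=
            Nat.div_eq_of_eq_mul_left hdpos hx.symm
          omega }
  have hs := (irrFinset F n).hasSum h
  rw [← Equiv.hasSum_iff e]
  have heq : ((fun x : {x : {f : F[X] // f.Monic ∧ Irreducible f} × ℕ // gmap F x = n} => h x.1.1.1) ∘ e) = h ∘ Subtype.val := by
    funext f
    rfl
  rw [heq]
  exact hs

theorem prod_monic_irreducible
    (q : ℕ) (hq : ∃ p m : ℕ, p.Prime ∧ 0 < m ∧ q = p ^ m)
    (F : Type) [Field F] [Fintype F] (hF : Fintype.card F = q)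
    (u : ℝ) (hu : |u| < 1 / q) :
    Multipliable (fun φ : {f : Polynomial F // f.Monic ∧ Irreducible f} =>
      1 - u ^ φ.val.natDegree) ∧
    ∏' φ : {f : Polynomial F // f.Monic ∧ Irreducible f}, (1 - u ^ φ.val.natDegree) =
      1 - q * u := by
  subst hF
  clear hq
  set q := Fintype.card F with hqdef
  have hq2 : 2 ≤ q := Fintype.one_lt_card
  have hqR : (1:ℝ) ≤ (q:ℝ) := by exact_mod_cast Nat.one_le_of_lt hq2
  have hqpos : (0:ℝ) < (q:ℝ) := by linarith
  have hqu : (q:ℝ) * |u| < 1 := by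
    rw [lt_div_iff₀ hqpos] at hu
    linarith [hu]
  have huabs : |u| < 1 := by
    have h1 : (1:ℝ)/q ≤ 1 := by
      rw [div_le_one hqpos]; exact hqR
    linarith
  have habsqu : |(q:ℝ) * u| < 1 := by
    rw [abs_mul, abs_of_pos hqpos]; exact hqu
  have hposqu : (0:ℝ) < 1 - (q:ℝ) * u := by
    have := le_abs_self ((q:ℝ) * u)
    linarith
  set I := {f : Polynomial F // f.Monic ∧ Irreducible f}
  have hdpos : ∀ φ : I, 0 < φ.1.natDegree := fun φ => φ.2.2.natDegree_pos
  have hupow : ∀ φ : I, |u ^ φ.1.natDegree| < 1 := by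
    intro φ
    rw [abs_pow]
    exact pow_lt_one₀ (abs_nonneg u) huabs (hdpos φ).ne'
  have hpos : ∀ φ : I, 0 < 1 - u ^ φ.1.natDegree := by
    intro φ
    have := le_abs_self (u ^ φ.1.natDegree)
    linarith [hupow φ]
  -- the summand over pairs
  set G : I × ℕ → ℝ :=
    fun x => -(u ^ ((x.2 + 1) * x.1.1.natDegree) / ((x.2 : ℝ) + 1)) with hGdef
  -- per-φ log series
  have hS5 : ∀ φ : I, HasSum (fun k => G (φ, k)) (Real.log (1 - u ^ φ.1.natDegree)) := by
    intro φ
    have h := (Real.hasSum_pow_div_log_of_abs_lt_one (hupow φ)).neg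
    rw [neg_neg] at h
    have hfun : (fun k : ℕ => -((u ^ φ.1.natDegree) ^ (k + 1) / ((k:ℝ) + 1)))
        = (fun k => G (φ, k)) := by
      funext k
      show -((u ^ φ.1.natDegree) ^ (k + 1) / ((k:ℝ) + 1))
          = -(u ^ ((k + 1) * φ.1.natDegree) / ((k:ℝ) + 1))
      rw [← pow_mul, Nat.mul_comm]
    exact hfun ▸ h
  -- fiberwise sums
  have hG_n : ∀ n : ℕ, n ≠ 0 → HasSum
      (fun x : {x : I × ℕ // gmap F x = n} => G x.1) (-((q:ℝ) * u) ^ n / n) := by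
    intro n hn
    have h := aux_fiber_hasSum (F := F) hn (fun f => -(u ^ n * (f.natDegree : ℝ) / n))
    have hval : ∑ f ∈ irrFinset F n, -(u ^ n * (f.natDegree : ℝ) / n)
        = -((q:ℝ) * u) ^ n / n := by
      rw [Finset.sum_neg_distrib]
      congr 1
      rw [← Finset.sum_div, ← Finset.mul_sum, ← Nat.cast_sum, aux_key_count hn]
      push_cast [mul_pow]
      ring
    rw [hval] at h
    have hfun : (fun x : {x : I × ℕ // gmap F x = n} => -(u ^ n * ((x.1.1.1.natDegree : ℕ) : ℝ) / n))
        = (fun x : {x : I × ℕ // gmap F x = n} => G x.1) := by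
      funext x
      obtain ⟨⟨φ, k⟩, hx⟩ := x
      have hx' : (k + 1) * φ.1.natDegree = n := hx
      have hcast : ((k:ℝ) + 1) * (φ.1.natDegree : ℝ) = n := by exact_mod_cast hx'
      show -(u ^ n * (φ.1.natDegree : ℝ) / n) = -(u ^ ((k+1) * φ.1.natDegree) / ((k:ℝ)+1))
      rw [hx']
      have hk : (0:ℝ) < (k:ℝ) + 1 := by positivity
      have hd : (0:ℝ) < (φ.1.natDegree : ℝ) := by exact_mod_cast hdpos φ
      have hnR : (0:ℝ) < (n:ℝ) := by
        rw [← hcast]; positivity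
      field_simp
      rw [mul_comm ((k:ℝ)+1) _] at hcast
      rw [← hcast]
      ring
    exact hfun ▸ h
  have habs_n : ∀ n : ℕ, n ≠ 0 → HasSum
      (fun x : {x : I × ℕ // gmap F x = n} => |G x.1|) (((q:ℝ) * |u|) ^ n / n) := by
    intro n hn
    have h := aux_fiber_hasSum (F := F) hn (fun f => |u| ^ n * (f.natDegree : ℝ) / n)
    have hval : ∑ f ∈ irrFinset F n, |u| ^ n * (f.natDegree : ℝ) / n
        = (((q:ℝ) * |u|) ^ n / n) := by
      rw [← Finset.sum_div, ← Finset.mul_sum, ← Nat.cast_sum, aux_key_count hn]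
      push_cast [mul_pow]
      ring
    rw [hval] at h
    have hfun : (fun x : {x : I × ℕ // gmap F x = n} => |u| ^ n * ((x.1.1.1.natDegree : ℕ) : ℝ) / n)
        = (fun x : {x : I × ℕ // gmap F x = n} => |G x.1|) := by
      funext x
      obtain ⟨⟨φ, k⟩, hx⟩ := x
      have hx' : (k + 1) * φ.1.natDegree = n := hx
      have hcast : ((k:ℝ) + 1) * (φ.1.natDegree : ℝ) = n := by exact_mod_cast hx'
      show |u| ^ n * (φ.1.natDegree : ℝ) / n = |(-(u ^ ((k+1) * φ.1.natDegree) / ((k:ℝ)+1)))|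
      have hk : (0:ℝ) < (k:ℝ) + 1 := by positivity
      have hd : (0:ℝ) < (φ.1.natDegree : ℝ) := by exact_mod_cast hdpos φ
      have hnR : (0:ℝ) < (n:ℝ) := by
        rw [← hcast]; positivity
      rw [abs_neg, abs_div, abs_pow, abs_of_pos hk, hx']
      field_simp
      rw [mul_comm ((k:ℝ)+1) _] at hcast
      rw [← hcast]
      ring
    exact hfun ▸ h
  -- summability of the majorant series
  have hvsum' : Summable (fun n : ℕ => if n = 0 then (0:ℝ) else ((q:ℝ) * |u|) ^ n / n) := by
    apply Summable.of_nonneg_of_le _ _ (summable_geometric_of_lt_one (by positivity) hqu)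
    · intro n
      split <;> positivity
    · intro n
      split
      · positivity
      · rename_i hn
        apply div_le_self (by positivity)
        exact_mod_cast Nat.one_le_iff_ne_zero.mpr hn
  set e := Equiv.sigmaFiberEquiv (gmap F) with hedef
  have habs_sigma : Summable (fun σ : Σ n : ℕ, {x : I × ℕ // gmap F x = n} => |G (e σ)|) := by
    rw [summable_sigma_of_nonneg (fun σ => abs_nonneg _)]
    constructor
    · intro n
      rcases eq_or_ne n 0 with rfl | hn
      · haveI := aux_fiber_empty (F := F)
        exact summable_empty
      · exact (habs_n n hn).summable
    · apply hvsum'.congr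
      intro n
      rcases eq_or_ne n 0 with rfl | hn
      · rw [if_pos rfl]
        haveI := aux_fiber_empty (F := F)
        exact tsum_empty.symm
      · rw [if_neg hn]
        exact ((habs_n n hn).tsum_eq).symm
  have hGsigma : Summable (fun σ : Σ n : ℕ, {x : I × ℕ // gmap F x = n} => G (e σ)) :=
    habs_sigma.of_abs
  have hGsum : Summable G := e.summable_iff.mp hGsigma
  -- the sum of v
  have hv : HasSum (fun n : ℕ => if n = 0 then (0:ℝ) else -((q:ℝ) * u) ^ n / n)
      (Real.log (1 - (q:ℝ) * u)) := by
    have h := (Real.hasSum_pow_div_log_of_abs_lt_one habsqu).neg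
    rw [neg_neg] at h
    have h2 : (fun k : ℕ => if (k + 1) = 0 then (0:ℝ) else -((q:ℝ) * u) ^ (k+1) / (k+1 : ℕ))
        = fun k : ℕ => -(((q:ℝ) * u) ^ (k + 1) / ((k:ℝ) + 1)) := by
      funext k
      rw [if_neg (Nat.succ_ne_zero k)]
      push_cast
      rw [neg_div]
    rw [← h2] at h
    have h3 := (hasSum_nat_add_iff
      (f := fun n : ℕ => if n = 0 then (0:ℝ) else -((q:ℝ) * u) ^ n / n) 1).mp h
    simpa using h3
  -- total sum
  have htsum : ∑' x : I × ℕ, G x = Real.log (1 - (q:ℝ) * u) := by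
    rw [← e.tsum_eq G, hGsigma.tsum_sigma, ← hv.tsum_eq]
    apply tsum_congr
    intro n
    rcases eq_or_ne n 0 with rfl | hn
    · rw [if_pos rfl]
      haveI := aux_fiber_empty (F := F)
      exact tsum_empty
    · rw [if_neg hn, ← (hG_n n hn).tsum_eq]
      rfl
  have hGhas : HasSum G (Real.log (1 - (q:ℝ) * u)) := htsum ▸ hGsum.hasSum
  have hlog : HasSum (fun φ : I => Real.log (1 - u ^ φ.1.natDegree))
      (Real.log (1 - (q:ℝ) * u)) := hGhas.prod_fiberwise hS5
  have hprod := hlog.rexp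
  have hfun2 : (Real.exp ∘ fun φ : I => Real.log (1 - u ^ φ.1.natDegree))
      = fun φ : I => 1 - u ^ φ.1.natDegree :=
    funext fun φ => Real.exp_log (hpos φ)
  rw [hfun2, Real.exp_log hposqu] at hprod
  exact ⟨hprod.multipliable, hprod.tprod_eq⟩
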